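/- Let A be a 5-by-5 reciprocal matrix. The Hermitian matrix Im A has a nonzero eigenvalue of algebraic multiplicity at least 2 if and only if ξ₂ξ₃ = 0 and ξ₁ + ξ₂ = ξ₃ + ξ₄ ≠ 0. (This is the criterion for the Kippenhahn curve of A to have multiple tangent lines.) -/

import Mathlib

open Matrix Polynomial

/-- A tridiagonal complex matrix with zero main diagonal whose symmetric
off-diagonal entries have pairwise products equal to one. -/
def IsReciprocal {n : ℕ} (A : Matrix (Fin n) (Fin n) ℂ) : Prop :=
  (∀ i j : Fin n, ((i : ℤ) - (j : ℤ)) ^ 2 ≠ 1 → A i j = 0) ∧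
  ∀ i j : Fin n, (j : ℕ) = (i : ℕ) + 1 → A i j * A j i = 1

/-- The Hermitian matrix `Im A = (A - A*)/(2i)`. -/
noncomputable def imPart {n : ℕ} (A : Matrix (Fin n) (Fin n) ℂ) :
    Matrix (Fin n) (Fin n) ℂ :=
  (2 * Complex.I)⁻¹ • (A - Aᴴ)

/- ### Auxiliary determinant lemmas -/

lemma det_fin_four'' {R : Type*} [CommRing R] (A : Matrix (Fin 4) (Fin 4) R) :
    det A = A 0 0 * det !![A 1 1, A 1 2, A 1 3; A 2 1, A 2 2, A 2 3; A 3 1, A 3 2, A 3 3]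
      - A 0 1 * det !![A 1 0, A 1 2, A 1 3; A 2 0, A 2 2, A 2 3; A 3 0, A 3 2, A 3 3]
      + A 0 2 * det !![A 1 0, A 1 1, A 1 3; A 2 0, A 2 1, A 2 3; A 3 0, A 3 1, A 3 3]
      - A 0 3 * det !![A 1 0, A 1 1, A 1 2; A 2 0, A 2 1, A 2 2; A 3 0, A 3 1, A 3 2] := by
  have e0 : A.submatrix Fin.succ (Fin.succAbove 0) =
      !![A 1 1, A 1 2, A 1 3; A 2 1, A 2 2, A 2 3; A 3 1, A 3 2, A 3 3] := by
    ext i j; fin_cases i <;> fin_cases j <;> rfl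
  have e1 : A.submatrix Fin.succ (Fin.succAbove 1) =
      !![A 1 0, A 1 2, A 1 3; A 2 0, A 2 2, A 2 3; A 3 0, A 3 2, A 3 3] := by
    ext i j; fin_cases i <;> fin_cases j <;> rfl
  have e2 : A.submatrix Fin.succ (Fin.succAbove 2) =
      !![A 1 0, A 1 1, A 1 3; A 2 0, A 2 1, A 2 3; A 3 0, A 3 1, A 3 3] := by
    ext i j; fin_cases i <;> fin_cases j <;> rfl
  have e3 : A.submatrix Fin.succ (Fin.succAbove 3) =
      !![A 1 0, A 1 1, A 1 2; A 2 0, A 2 1, A 2 2; A 3 0, A 3 1, A 3 2] := by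
    ext i j; fin_cases i <;> fin_cases j <;> rfl
  rw [Matrix.det_succ_row_zero, Fin.sum_univ_four, e0, e1, e2, e3]
  norm_num [show ((3:Fin 4):ℕ) = 3 from rfl]
  ring

lemma det_fin_five'' {R : Type*} [CommRing R] (A : Matrix (Fin 5) (Fin 5) R) :
    det A = A 0 0 * det (A.submatrix Fin.succ (Fin.succAbove 0))
      - A 0 1 * det (A.submatrix Fin.succ (Fin.succAbove 1))
      + A 0 2 * det (A.submatrix Fin.succ (Fin.succAbove 2))
      - A 0 3 * det (A.submatrix Fin.succ (Fin.succAbove 3))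
      + A 0 4 * det (A.submatrix Fin.succ (Fin.succAbove 4)) := by
  rw [Matrix.det_succ_row_zero, Fin.sum_univ_five]
  norm_num [show ((3:Fin 5):ℕ) = 3 from rfl, show ((4:Fin 5):ℕ) = 4 from rfl]
  ring

lemma charpoly_tridiag5 (c0 c1 c2 c3 e0 e1 e2 e3 : ℂ) :
    (!![0, c0, 0, 0, 0; e0, 0, c1, 0, 0; 0, e1, 0, c2, 0; 0, 0, e2, 0, c3; 0, 0, 0, e3, 0] :
      Matrix (Fin 5) (Fin 5) ℂ).charpoly
    = X^5 - C (c0*e0 + c1*e1 + c2*e2 + c3*e3) * X^3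
      + C (c0*e0*(c2*e2) + c0*e0*(c3*e3) + c1*e1*(c3*e3)) * X := by
  set B : Matrix (Fin 5) (Fin 5) ℂ :=
    !![0, c0, 0, 0, 0; e0, 0, c1, 0, 0; 0, e1, 0, c2, 0; 0, 0, e2, 0, c3; 0, 0, 0, e3, 0] with hB
  have hcm : charmatrix B =
      !![X, -C c0, 0, 0, 0; -C e0, X, -C c1, 0, 0; 0, -C e1, X, -C c2, 0;
         0, 0, -C e2, X, -C c3; 0, 0, 0, -C e3, X] := by
    ext i j
    fin_cases i <;> fin_cases j <;>
      simp [charmatrix_apply_eq, charmatrix_apply_ne, hB, Matrix.vecHead, Matrix.vecTail]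
  rw [Matrix.charpoly, hcm]
  set E : Matrix (Fin 5) (Fin 5) ℂ[X] :=
    !![X, -C c0, 0, 0, 0; -C e0, X, -C c1, 0, 0; 0, -C e1, X, -C c2, 0;
       0, 0, -C e2, X, -C c3; 0, 0, 0, -C e3, X] with hE
  have s0 : E.submatrix Fin.succ (Fin.succAbove 0) =
      !![X, -C c1, 0, 0; -C e1, X, -C c2, 0; 0, -C e2, X, -C c3; 0, 0, -C e3, X] := by
    ext i j; fin_cases i <;> fin_cases j <;> rfl
  have s1 : E.submatrix Fin.succ (Fin.succAbove 1) =
      !![-C e0, -C c1, 0, 0; 0, X, -C c2, 0; 0, -C e2, X, -C c3; 0, 0, -C e3, X] := by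
    ext i j; fin_cases i <;> fin_cases j <;> rfl
  rw [det_fin_five'', s0, s1]
  simp only [det_fin_four'', Matrix.det_fin_three]
  simp only [hE]
  simp only [Matrix.of_apply, Matrix.cons_val_zero, Matrix.cons_val_one, Matrix.cons_val, Matrix.vecHead, Matrix.vecTail, Fin.succ_zero_eq_one, Fin.succ_one_eq_two, zero_mul, mul_zero, add_zero, sub_zero, zero_add, zero_sub, C_add, C_mul]
  ring

/- ### Entry products -/

lemma prod_entry (a b : ℂ) (hab : a * b = 1) :
    ((2*Complex.I)⁻¹ * (a - (starRingEnd ℂ) b)) * ((2*Complex.I)⁻¹ * (b - (starRingEnd ℂ) a))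
      = (((‖a‖ - ‖b‖)^2/4 : ℝ) : ℂ) := by
  have hinv : (2*Complex.I)⁻¹ = -Complex.I/2 := by
    rw [mul_inv, Complex.inv_I]; ring
  have e1 : a * (starRingEnd ℂ) a = ((‖a‖ : ℂ))^2 := by
    rw [Complex.mul_conj]; push_cast [Complex.normSq_eq_norm_sq]; ring
  have e2 : b * (starRingEnd ℂ) b = ((‖b‖ : ℂ))^2 := by
    rw [Complex.mul_conj]; push_cast [Complex.normSq_eq_norm_sq]; ring
  have e3 : (starRingEnd ℂ) a * (starRingEnd ℂ) b = 1 := by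
    rw [← _root_.map_mul, hab, _root_.map_one]
  have e4 : ((‖a‖ : ℂ)) * ((‖b‖ : ℂ)) = 1 := by
    rw [← Complex.ofReal_mul, ← norm_mul, hab]; simp
  have hI2 : Complex.I^2 = -1 := Complex.I_sq
  rw [hinv]
  push_cast
  ring_nf
  linear_combination (-(1:ℂ)/4)*hab + (1/4)*e1 + (1/4)*e2 - (1/4)*e3 + (1/2)*e4 +
    ((a - (starRingEnd ℂ) b)*(b - (starRingEnd ℂ) a)/4) * hI2

/- ### Root multiplicity lemmas -/

lemma rm_X {μ : ℂ} (h : μ ≠ 0) : rootMultiplicity μ (X : ℂ[X]) = 0 := by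
  apply rootMultiplicity_eq_zero
  simp [IsRoot, h]

lemma quad_ne_zero (y : ℂ) : (X^2 - C y : ℂ[X]) ≠ 0 := by
  intro h
  have := congrArg (fun p => Polynomial.coeff p 2) h
  simp at this

lemma rm_quad_ne {μ y : ℂ} (h : μ^2 ≠ y) : rootMultiplicity μ (X^2 - C y : ℂ[X]) = 0 := by
  apply rootMultiplicity_eq_zero
  simp only [IsRoot, eval_sub, eval_pow, eval_X, eval_C, sub_eq_zero]
  exact h

lemma rm_quad_eq {μ y : ℂ} (h0 : μ ≠ 0) (h : μ^2 = y) :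
    rootMultiplicity μ (X^2 - C y : ℂ[X]) = 1 := by
  have hfac : (X^2 - C y : ℂ[X]) = (X - C μ) * (X - C (-μ)) := by
    rw [← h, show (C (μ^2) : ℂ[X]) = (C μ)^2 from by rw [map_pow], map_neg]; ring
  rw [hfac, rootMultiplicity_mul (by
    apply mul_ne_zero <;> exact X_sub_C_ne_zero _)]
  rw [rootMultiplicity_X_sub_C_self]
  have : rootMultiplicity μ (X - C (-μ) : ℂ[X]) = 0 := by
    apply rootMultiplicity_eq_zero
    simp only [IsRoot, eval_sub, eval_X, eval_C]
    intro hr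
    apply h0
    have : (2:ℂ) * μ = 0 := by linear_combination hr
    simpa using this
  omega

lemma factor5 (a b : ℂ) :
    (X^5 - C (a+b)*X^3 + C (a*b)*X : ℂ[X]) = X * (X^2 - C a) * (X^2 - C b) := by
  rw [C_add, C_mul]; ring

lemma mult_iff (s q : ℝ) (hD : 0 ≤ s^2 - 4*q) :
    (∃ μ : ℂ, μ ≠ 0 ∧ 2 ≤ rootMultiplicity μ (X^5 - C (s:ℂ)*X^3 + C ((q:ℝ):ℂ)*X)) ↔
      (s^2 = 4*q ∧ s ≠ 0) := by
  set t : ℝ := Real.sqrt (s^2 - 4*q) with ht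
  have ht2 : t^2 = s^2 - 4*q := Real.sq_sqrt hD
  set y1 : ℝ := (s + t)/2 with hy1
  set y2 : ℝ := (s - t)/2 with hy2
  have hsum' : y1 + y2 = s := by rw [hy1, hy2]; ring
  have hprod' : y1 * y2 = q := by rw [hy1, hy2]; nlinarith [ht2]
  have hsum : (s:ℂ) = (y1:ℂ) + (y2:ℂ) := by rw [← Complex.ofReal_add, hsum']
  have hprod : ((q:ℝ):ℂ) = (y1:ℂ) * (y2:ℂ) := by rw [← Complex.ofReal_mul, hprod']
  have hfac : (X^5 - C (s:ℂ)*X^3 + C ((q:ℝ):ℂ)*X : ℂ[X])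
      = X * (X^2 - C ((y1:ℝ):ℂ)) * (X^2 - C ((y2:ℝ):ℂ)) := by
    rw [hsum, hprod, ← factor5]
  have hne : (X * (X^2 - C ((y1:ℝ):ℂ)) * (X^2 - C ((y2:ℝ):ℂ)) : ℂ[X]) ≠ 0 :=
    mul_ne_zero (mul_ne_zero X_ne_zero (quad_ne_zero _)) (quad_ne_zero _)
  constructor
  · rintro ⟨μ, hμ, hm⟩
    rw [hfac, rootMultiplicity_mul hne,
      rootMultiplicity_mul (mul_ne_zero X_ne_zero (quad_ne_zero _)), rm_X hμ] at hm
    by_cases h1 : μ^2 = ((y1:ℝ):ℂ)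
    · by_cases h2 : μ^2 = ((y2:ℝ):ℂ)
      · have hyy : y1 = y2 := by exact_mod_cast h1.symm.trans h2
        have htz : t = 0 := by rw [hy1, hy2] at hyy; linarith
        have hD0 : s^2 - 4*q = 0 := by
          have := ht2; rw [htz] at this; linarith
        refine ⟨by linarith, ?_⟩
        intro hs
        apply hμ
        have : ((y1:ℝ):ℂ) = 0 := by
          rw [hy1, htz, hs]; norm_num
        rw [this] at h1
        exact pow_eq_zero_iff (by norm_num) |>.mp h1
      · rw [rm_quad_eq hμ h1, rm_quad_ne h2] at hm; omega
    · by_cases h2 : μ^2 = ((y2:ℝ):ℂ)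
      · rw [rm_quad_ne h1, rm_quad_eq hμ h2] at hm; omega
      · rw [rm_quad_ne h1, rm_quad_ne h2] at hm; omega
  · rintro ⟨hsq, hs⟩
    have htz : t = 0 := by
      rw [ht, show s^2 - 4*q = 0 from by linarith, Real.sqrt_zero]
    have hy12 : y1 = s/2 := by rw [hy1, htz]; ring
    have hy22 : y2 = s/2 := by rw [hy2, htz]; ring
    obtain ⟨μ, hμ⟩ := IsAlgClosed.exists_pow_nat_eq ((s/2 : ℝ) : ℂ) (n := 2) (by norm_num)
    have hμ0 : μ ≠ 0 := by
      intro h; rw [h] at hμ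
      have h1 : ((s/2:ℝ):ℂ) = 0 := by rw [← hμ]; ring
      have h2 : (s/2:ℝ) = 0 := by exact_mod_cast h1
      exact hs (by linarith)
    refine ⟨μ, hμ0, ?_⟩
    rw [hfac, rootMultiplicity_mul hne,
      rootMultiplicity_mul (mul_ne_zero X_ne_zero (quad_ne_zero _)), rm_X hμ0,
      rm_quad_eq hμ0 (by rw [hy12]; exact hμ), rm_quad_eq hμ0 (by rw [hy22]; exact hμ)]

set_option maxHeartbeats 1600000 in
set_option maxRecDepth 100000 in
/-- For a 5-by-5 reciprocal matrix, `Im A` has a nonzero multiple eigenvalue iff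
`ξ₂ξ₃ = 0` and `ξ₁ + ξ₂ = ξ₃ + ξ₄ ≠ 0`. -/
theorem imPart_multiple_eigenvalue_iff_five (A : Matrix (Fin 5) (Fin 5) ℂ) (hA : IsReciprocal A)
    (ξ₁ ξ₂ ξ₃ ξ₄ : ℝ)
    (h1 : ξ₁ = (‖A 0 1‖ - ‖A 1 0‖) ^ 2 / 4)
    (h2 : ξ₂ = (‖A 1 2‖ - ‖A 2 1‖) ^ 2 / 4)
    (h3 : ξ₃ = (‖A 2 3‖ - ‖A 3 2‖) ^ 2 / 4)
    (h4 : ξ₄ = (‖A 3 4‖ - ‖A 4 3‖) ^ 2 / 4) :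
    (∃ μ : ℂ, μ ≠ 0 ∧ 2 ≤ (imPart A).charpoly.rootMultiplicity μ) ↔
      (ξ₂ * ξ₃ = 0 ∧ ξ₁ + ξ₂ = ξ₃ + ξ₄ ∧ ξ₃ + ξ₄ ≠ 0) := by
  have hξ1 : 0 ≤ ξ₁ := by rw [h1]; positivity
  have hξ2 : 0 ≤ ξ₂ := by rw [h2]; positivity
  have hξ3 : 0 ≤ ξ₃ := by rw [h3]; positivity
  have hξ4 : 0 ≤ ξ₄ := by rw [h4]; positivity
  have h0 : ∀ i j : Fin 5, ((i : ℤ) - (j : ℤ)) ^ 2 ≠ 1 → imPart A i j = 0 := by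
    intro i j h
    have h' : ((j : ℤ) - (i : ℤ)) ^ 2 ≠ 1 := by
      rwa [show ((j:ℤ) - (i:ℤ))^2 = ((i:ℤ)-(j:ℤ))^2 from by ring]
    simp [imPart, Matrix.sub_apply, Matrix.conjTranspose_apply, hA.1 i j h, hA.1 j i h']
  have hM : imPart A = !![0, imPart A 0 1, 0, 0, 0;
      imPart A 1 0, 0, imPart A 1 2, 0, 0;
      0, imPart A 2 1, 0, imPart A 2 3, 0;
      0, 0, imPart A 3 2, 0, imPart A 3 4;
      0, 0, 0, imPart A 4 3, 0] := by
    ext i j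
    fin_cases i <;> fin_cases j <;>
      first
        | rfl
        | exact h0 _ _ (by decide)
  have hent : ∀ i j : Fin 5,
      imPart A i j = (2*Complex.I)⁻¹ * (A i j - (starRingEnd ℂ) (A j i)) := by
    intro i j
    simp [imPart, Matrix.sub_apply, Matrix.conjTranspose_apply]
  have hp1 : imPart A 0 1 * imPart A 1 0 = ((ξ₁:ℝ):ℂ) := by
    rw [hent 0 1, hent 1 0, prod_entry _ _ (hA.2 0 1 rfl), h1]
  have hp2 : imPart A 1 2 * imPart A 2 1 = ((ξ₂:ℝ):ℂ) := by
    rw [hent 1 2, hent 2 1, prod_entry _ _ (hA.2 1 2 rfl), h2]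
  have hp3 : imPart A 2 3 * imPart A 3 2 = ((ξ₃:ℝ):ℂ) := by
    rw [hent 2 3, hent 3 2, prod_entry _ _ (hA.2 2 3 rfl), h3]
  have hp4 : imPart A 3 4 * imPart A 4 3 = ((ξ₄:ℝ):ℂ) := by
    rw [hent 3 4, hent 4 3, prod_entry _ _ (hA.2 3 4 rfl), h4]
  set s : ℝ := ξ₁ + ξ₂ + ξ₃ + ξ₄ with hs
  set q : ℝ := ξ₁*ξ₃ + ξ₁*ξ₄ + ξ₂*ξ₄ with hq
  have hcp : (imPart A).charpoly = X^5 - C (s:ℂ)*X^3 + C ((q:ℝ):ℂ)*X := by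
    rw [hM, charpoly_tridiag5, hp1, hp2, hp3, hp4]
    rw [show ((ξ₁:ℂ)) + ((ξ₂:ℂ)) + ((ξ₃:ℂ)) + ((ξ₄:ℂ)) = ((s:ℝ):ℂ) from by
      rw [hs]; push_cast; ring]
    rw [show ((ξ₁:ℂ))*((ξ₃:ℂ)) + ((ξ₁:ℂ))*((ξ₄:ℂ)) + ((ξ₂:ℂ))*((ξ₄:ℂ)) = ((q:ℝ):ℂ) from by
      rw [hq]; push_cast; ring]
  have hD : 0 ≤ s^2 - 4*q := by
    rw [hs, hq]; nlinarith [sq_nonneg (ξ₁ + ξ₂ - ξ₃ - ξ₄), mul_nonneg hξ2 hξ3]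
  rw [hcp, mult_iff s q hD]
  constructor
  · rintro ⟨hsq, hsn⟩
    have key : (ξ₁ + ξ₂ - ξ₃ - ξ₄)^2 + 4*(ξ₂*ξ₃) = 0 := by rw [hs, hq] at hsq; nlinarith
    have hγ : ξ₂ * ξ₃ = 0 := by
      nlinarith [sq_nonneg (ξ₁ + ξ₂ - ξ₃ - ξ₄), mul_nonneg hξ2 hξ3]
    have hd : ξ₁ + ξ₂ = ξ₃ + ξ₄ := by nlinarith [key, hγ, sq_nonneg (ξ₁ + ξ₂ - ξ₃ - ξ₄)]
    refine ⟨hγ, hd, ?_⟩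
    intro h
    exact hsn (by rw [hs]; linarith)
  · rintro ⟨hγ, hd, hne⟩
    constructor
    · rw [hs, hq]; nlinarith
    · rw [hs]; intro h; exact hne (by linarith)
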